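/- Let ℒ be a set of at least two lines in 𝕊², each of the form y = ax + b, whose common intersection ⋂ℒ is infinite. Then there exist a sign σ ∈ {+1, −1} and reals t₁, t₂ such that every line of ℒ (written y = (a₁+ja₂)x + (b₁+jb₂)) satisfies a₁ − σa₂ = t₁ and b₁ − σb₂ = t₂, and there exists s ∈ ℝ such that every point (x,y) in the common intersection satisfies x₁ + σx₂ = s. Moreover: if s = 0 then all lines of ℒ have the same coefficient b, and every point (x,y) in the common intersection satisfies y₁ + σy₂ = b₁ + σb₂; if s ≠ 0 then there exist m, m' ∈ ℝ such that every line of ℒ satisfies b₁ = s(m − a₁) and b₂ = s(m' − a₂), and every point (x,y) in the common intersection satisfies y₁ + σy₂ = s(m + σm'). -/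

import Mathlib

/-- The double (split-complex) numbers `ℝ[j]` with `j² = 1`: the number `a = a₁ + j a₂`
is recorded by its coordinates `re = a₁` and `im = a₂`. -/
@[ext] structure DoubleNumber where
  re : ℝ
  im : ℝ

namespace DoubleNumber

/-- Addition of double numbers: componentwise. -/
instance : Add DoubleNumber := ⟨fun a b => ⟨a.re + b.re, a.im + b.im⟩⟩

/-- Multiplication of double numbers, determined by `j² = 1`:
`(a₁ + j a₂)(b₁ + j b₂) = (a₁b₁ + a₂b₂) + j (a₁b₂ + a₂b₁)`. -/
instance : Mul DoubleNumber := ⟨fun a b => ⟨a.re * b.re + a.im * b.im, a.re * b.im + a.im * b.re⟩⟩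

end DoubleNumber

/-- The line in the double plane `𝕊²` defined by the equation `y = a x + b`. -/
def sLine (a b : DoubleNumber) : Set (DoubleNumber × DoubleNumber) :=
  {p | p.2 = a * p.1 + b}

/-- branch equation: in the coordinate `z ↦ z.re + σ z.im` (with `σ² = 1`),
a double line becomes a real line. -/
lemma branch_eq (σ : ℝ) (hσ : σ * σ = 1) {a b p q : DoubleNumber} (h : q = a * p + b) :
    q.re + σ * q.im =
      (a.re + σ * a.im) * (p.re + σ * p.im) + (b.re + σ * b.im) := by
  have h1 : q.re = a.re * p.re + a.im * p.im + b.re := by rw [h]; rfl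
  have h2 : q.im = a.re * p.im + a.im * p.re + b.im := by rw [h]; rfl
  rw [h1, h2]; linear_combination (-(a.im * p.im)) * hσ

/-- two distinct real lines meet in at most one point -/
lemma real_line_unique {A B A' B' x y x' y' : ℝ} (h : ¬(A = A' ∧ B = B'))
    (h1 : y = A * x + B) (h2 : y = A' * x + B')
    (h3 : y' = A * x' + B) (h4 : y' = A' * x' + B') : x = x' ∧ y = y' := by
  by_cases hA : A = A'
  · exact absurd ⟨hA, by subst hA; linarith⟩ h
  · have hx : x = x' := by
      have : (A - A') * x = (A - A') * x' := by linarith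
      exact mul_left_cancel₀ (sub_ne_zero.mpr hA) this
    exact ⟨hx, by rw [h1, hx, ← h3]⟩

/-- **Lemma 3.1(b).** Let `ℒ` be a set of at least two lines of the form `y = ax + b`
(recorded by their coefficient pairs `(a, b)`) whose common intersection is infinite.
Then there are a sign `σ ∈ {+1, -1}` and `t₁, t₂ ∈ ℝ` such that every line satisfies
`a₁ - σ a₂ = t₁` and `b₁ - σ b₂ = t₂`, and there is `s ∈ ℝ` such that every point `(x, y)`
of the common intersection satisfies `x₁ + σ x₂ = s`. Moreover: if `s = 0` then all lines
have the same coefficient `b` and every intersection point satisfies `y₁ + σ y₂ = b₁ + σ b₂`;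
if `s ≠ 0` then there are `m, m' ∈ ℝ` such that every line satisfies `b₁ = s(m - a₁)` and
`b₂ = s(m' - a₂)`, and every intersection point satisfies `y₁ + σ y₂ = s(m + σ m')`. -/
theorem double_line_family_structure (L : Set (DoubleNumber × DoubleNumber))
    (htwo : ∃ l₁ ∈ L, ∃ l₂ ∈ L, l₁ ≠ l₂)
    (hinf : (⋂ l ∈ L, sLine l.1 l.2).Infinite) :
    ∃ σ : ℝ, (σ = 1 ∨ σ = -1) ∧
    ∃ t₁ t₂ : ℝ,
      (∀ l ∈ L, l.1.re - σ * l.1.im = t₁ ∧ l.2.re - σ * l.2.im = t₂) ∧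
      ∃ s : ℝ,
        (∀ p ∈ ⋂ l ∈ L, sLine l.1 l.2, p.1.re + σ * p.1.im = s) ∧
        (s = 0 →
          ∃ b : DoubleNumber, (∀ l ∈ L, l.2 = b) ∧
            ∀ p ∈ ⋂ l ∈ L, sLine l.1 l.2,
              p.2.re + σ * p.2.im = b.re + σ * b.im) ∧
        (s ≠ 0 →
          ∃ m m' : ℝ,
            (∀ l ∈ L, l.2.re = s * (m - l.1.re) ∧ l.2.im = s * (m' - l.1.im)) ∧
            ∀ p ∈ ⋂ l ∈ L, sLine l.1 l.2,
              p.2.re + σ * p.2.im = s * (m + σ * m')) := by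
  set I := ⋂ l ∈ L, sLine l.1 l.2 with hI
  have hmem : ∀ p ∈ I, ∀ l ∈ L, p.2 = l.1 * p.1 + l.2 := by
    intro p hp l hl
    have := Set.mem_iInter₂.mp hp l hl
    exact this
  obtain ⟨p₀, hp₀⟩ := hinf.nonempty
  obtain ⟨l₁, hl₁, l₂, hl₂, hne⟩ := htwo
  -- Step 1: there is a sign σ such that all lines agree in the (-σ)-branch.
  have key : ∃ σ : ℝ, (σ = 1 ∨ σ = -1) ∧
      ∀ l ∈ L, ∀ l' ∈ L,
        l.1.re - σ * l.1.im = l'.1.re - σ * l'.1.im ∧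
        l.2.re - σ * l.2.im = l'.2.re - σ * l'.2.im := by
    by_contra hcon
    push_neg at hcon
    have h1 := hcon 1 (Or.inl rfl)
    have h2 := hcon (-1) (Or.inr rfl)
    obtain ⟨k₁, hk₁, k₁', hk₁', hbad₁⟩ := h1
    obtain ⟨k₂, hk₂, k₂', hk₂', hbad₂⟩ := h2
    -- then the intersection is a subsingleton, contradicting infiniteness
    have hsub : I.Subsingleton := by
      intro p hp q hq
      -- minus branch determined (using k₁ ≠ k₁' in minus branch, σ = -1 coordinate)
      have bm : ∀ r ∈ I, ∀ l ∈ L, r.2.re + (-1) * r.2.im =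
          (l.1.re + (-1) * l.1.im) * (r.1.re + (-1) * r.1.im) + (l.2.re + (-1) * l.2.im) :=
        fun r hr l hl => branch_eq (-1) (by norm_num) (hmem r hr l hl)
      have bp : ∀ r ∈ I, ∀ l ∈ L, r.2.re + 1 * r.2.im =
          (l.1.re + 1 * l.1.im) * (r.1.re + 1 * r.1.im) + (l.2.re + 1 * l.2.im) :=
        fun r hr l hl => branch_eq 1 (by norm_num) (hmem r hr l hl)
      have hbad₁' : ¬(k₁.1.re + (-1) * k₁.1.im = k₁'.1.re + (-1) * k₁'.1.im ∧
           k₁.2.re + (-1) * k₁.2.im = k₁'.2.re + (-1) * k₁'.2.im) := by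
        rintro ⟨ha, hb⟩
        exact hbad₁ (by linarith) (by linarith)
      have hbad₂' : ¬(k₂.1.re + 1 * k₂.1.im = k₂'.1.re + 1 * k₂'.1.im ∧
           k₂.2.re + 1 * k₂.2.im = k₂'.2.re + 1 * k₂'.2.im) := by
        rintro ⟨ha, hb⟩
        exact hbad₂ (by linarith) (by linarith)
      have hm := real_line_unique hbad₁' (bm p hp k₁ hk₁) (bm p hp k₁' hk₁')
        (bm q hq k₁ hk₁) (bm q hq k₁' hk₁')
      have hpl := real_line_unique hbad₂' (bp p hp k₂ hk₂) (bp p hp k₂' hk₂')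
        (bp q hq k₂ hk₂) (bp q hq k₂' hk₂')
      obtain ⟨hm1, hm2⟩ := hm
      obtain ⟨hp1, hp2⟩ := hpl
      ext
      · linarith
      · linarith
      · linarith
      · linarith
    exact hinf (hsub.finite)
  obtain ⟨σ, hσ, hagree⟩ := key
  have hσ2 : σ * σ = 1 := by rcases hσ with h | h <;> simp [h]
  refine ⟨σ, hσ, l₁.1.re - σ * l₁.1.im, l₁.2.re - σ * l₁.2.im,
    fun l hl => hagree l hl l₁ hl₁, ?_⟩
  -- the σ-branch: lines l₁ l₂ differ there
  have A := fun (l : DoubleNumber × DoubleNumber) => l.1.re + σ * l.1.im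
  have hdiff : ¬((l₁.1.re + σ * l₁.1.im = l₂.1.re + σ * l₂.1.im) ∧
      (l₁.2.re + σ * l₁.2.im = l₂.2.re + σ * l₂.2.im)) := by
    rintro ⟨ha, hb⟩
    obtain ⟨ha', hb'⟩ := hagree l₁ hl₁ l₂ hl₂
    have hσ0 : σ ≠ 0 := by rcases hσ with h | h <;> simp [h]
    apply hne
    have e1 : l₁.1.re = l₂.1.re := by linarith
    have e2 : σ * l₁.1.im = σ * l₂.1.im := by linarith
    have e3 : l₁.2.re = l₂.2.re := by linarith
    have e4 : σ * l₁.2.im = σ * l₂.2.im := by linarith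
    ext
    · exact e1
    · exact mul_left_cancel₀ hσ0 e2
    · exact e3
    · exact mul_left_cancel₀ hσ0 e4
  have bσ : ∀ r ∈ I, ∀ l ∈ L, r.2.re + σ * r.2.im =
      (l.1.re + σ * l.1.im) * (r.1.re + σ * r.1.im) + (l.2.re + σ * l.2.im) :=
    fun r hr l hl => branch_eq σ hσ2 (hmem r hr l hl)
  set s := p₀.1.re + σ * p₀.1.im with hs
  set c := p₀.2.re + σ * p₀.2.im with hc
  have hxy : ∀ p ∈ I, p.1.re + σ * p.1.im = s ∧ p.2.re + σ * p.2.im = c := by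
    intro p hp
    exact real_line_unique hdiff (bσ p hp l₁ hl₁) (bσ p hp l₂ hl₂)
      (bσ p₀ hp₀ l₁ hl₁) (bσ p₀ hp₀ l₂ hl₂)
  -- every line satisfies A l * s + B l = c
  have hline : ∀ l ∈ L, (l.1.re + σ * l.1.im) * s + (l.2.re + σ * l.2.im) = c := by
    intro l hl
    have := bσ p₀ hp₀ l hl
    rw [← hs, ← hc] at this
    linarith
  refine ⟨s, fun p hp => (hxy p hp).1, ?_, ?_⟩
  · -- case s = 0
    intro hs0
    refine ⟨l₁.2, ?_, ?_⟩
    · intro l hl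
      have h1 := hline l hl
      have h2 := hline l₁ hl₁
      rw [hs0] at h1 h2
      obtain ⟨_, hb'⟩ := hagree l hl l₁ hl₁
      have hσ0 : σ ≠ 0 := by rcases hσ with h | h <;> simp [h]
      have e3 : l.2.re = l₁.2.re := by linarith
      have e4 : σ * l.2.im = σ * l₁.2.im := by linarith
      ext
      · exact e3
      · exact mul_left_cancel₀ hσ0 e4
    · intro p hp
      have h2 := hline l₁ hl₁
      rw [hs0] at h2
      have := (hxy p hp).2
      linarith
  · -- case s ≠ 0
    intro hs0
    clear_value s c
    set t₁ := l₁.1.re - σ * l₁.1.im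
    set t₂ := l₁.2.re - σ * l₁.2.im
    refine ⟨(c + t₂ + s * t₁) / (2 * s), σ * (c - t₂ - s * t₁) / (2 * s), ?_, ?_⟩
    · intro l hl
      have h1 := hline l hl
      obtain ⟨ha', hb'⟩ := hagree l hl l₁ hl₁
      have e1 : 2 * l.2.re + 2 * s * l.1.re = c + t₂ + s * t₁ := by
        linear_combination h1 + hb' + s * ha'
      have e2 : 2 * l.2.im + 2 * s * l.1.im = σ * (c - t₂ - s * t₁) := by
        linear_combination σ * h1 - σ * hb' - σ * s * ha' - (2 * l.2.im + 2 * s * l.1.im) * hσ2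
      constructor
      · field_simp
        linear_combination e1
      · field_simp
        linear_combination e2
    · intro p hp
      have hpc := (hxy p hp).2
      rcases hσ with h | h <;> rw [h] at hpc ⊢ <;> field_simp <;>
        linear_combination 2 * hpc
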